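/- arXiv:0902.4806 — 3 statements merged into one kernel-verified Lean document; each statement's English description precedes it below -/
import Mathlib

section
/- For all t > 0, x > 0, and λ ≥ 0, with p(t,x,y) = (1/√(2π t x)) e^{−(x+y)/(2t)} sinh(√(xy)/t), one has ∫_0^∞ e^{−λ y} p(t,x,y) dy = (1+2λt)^{−3/2} exp( −λx/(1+2λt) ). In particular ∫_0^∞ p(t,x,y) dy = 1. -/
open Real MeasureTheory

private lemma odd_gauss' (a : ℝ) : ∫ v : ℝ, v * Real.exp (-a*v^2) = 0 := by
  have h1 := MeasureTheory.integral_neg_eq_self (fun v : ℝ => v * Real.exp (-a*v^2)) volume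
  simp only [neg_sq, neg_mul, integral_neg] at h1
  have h2 : (∫ v : ℝ, v * Real.exp (-a*v^2)) = ∫ v : ℝ, v * Real.exp (-(a*v^2)) := by
    congr 1; funext v; ring_nf
  rw [h2] at *
  linarith

private lemma intg' (a b : ℝ) (ha : 0 < a) :
    Integrable (fun u : ℝ => u * Real.exp (-a*u^2 + b*u)) := by
  have hg : Integrable (fun v : ℝ => (v + b/(2*a)) * Real.exp (-a*v^2) * Real.exp (b^2/(4*a))) := by
    have heq : (fun v : ℝ => (v + b/(2*a)) * Real.exp (-a*v^2) * Real.exp (b^2/(4*a)))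
        = fun v : ℝ => (v * Real.exp (-a*v^2)) * Real.exp (b^2/(4*a))
          + (b/(2*a) * Real.exp (b^2/(4*a))) * Real.exp (-a*v^2) := by
      funext v; ring
    rw [heq]
    exact ((integrable_mul_exp_neg_mul_sq ha).mul_const _).add
      ((integrable_exp_neg_mul_sq ha).const_mul _)
  have h2 := hg.comp_sub_right (b/(2*a))
  have heq2 : (fun u : ℝ => (u - b/(2*a) + b/(2*a)) * Real.exp (-a*(u - b/(2*a))^2)
        * Real.exp (b^2/(4*a)))
      = fun u : ℝ => u * Real.exp (-a*u^2 + b*u) := by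
    funext u
    rw [sub_add_cancel, mul_assoc, ← Real.exp_add]
    congr 2
    field_simp
    ring
  rwa [heq2] at h2

private lemma gauss_lin' (a b : ℝ) (ha : 0 < a) :
    ∫ u : ℝ, u * Real.exp (-a*u^2 + b*u)
      = b/(2*a) * Real.sqrt (π/a) * Real.exp (b^2/(4*a)) := by
  have heq : (fun u : ℝ => u * Real.exp (-a*u^2 + b*u))
      = fun u => (fun v : ℝ => (v + b/(2*a)) * Real.exp (-a*v^2) * Real.exp (b^2/(4*a)))
        (u - b/(2*a)) := by
    funext u
    simp only
    rw [sub_add_cancel, mul_assoc, ← Real.exp_add]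
    congr 2
    field_simp
    ring
  rw [heq, MeasureTheory.integral_sub_right_eq_self
      (fun v : ℝ => (v + b/(2*a)) * Real.exp (-a*v^2) * Real.exp (b^2/(4*a))) (b/(2*a))]
  have heq2 : (fun v : ℝ => (v + b/(2*a)) * Real.exp (-a*v^2) * Real.exp (b^2/(4*a)))
      = fun v : ℝ => (v * Real.exp (-a*v^2)) * Real.exp (b^2/(4*a))
        + (b/(2*a) * Real.exp (b^2/(4*a))) * Real.exp (-a*v^2) := by
    funext v; ring
  rw [heq2, integral_add ((integrable_mul_exp_neg_mul_sq ha).mul_const _)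
      ((integrable_exp_neg_mul_sq ha).const_mul _),
    integral_mul_const, odd_gauss', integral_const_mul, integral_gaussian]
  ring

private lemma halves' (a b : ℝ) (ha : 0 < a) :
    (∫ u in Set.Ioi (0:ℝ), u * Real.exp (-a*u^2 + b*u))
      - (∫ u in Set.Ioi (0:ℝ), u * Real.exp (-a*u^2 + -b*u))
      = ∫ u : ℝ, u * Real.exp (-a*u^2 + b*u) := by
  have hint := intg' a b ha
  have h2 := integral_comp_neg_Ioi (0:ℝ) (fun u : ℝ => u * Real.exp (-a*u^2 + b*u))
  simp only [neg_sq, mul_neg, neg_mul, neg_zero, integral_neg, neg_neg] at h2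
  have h3 : (∫ u in Set.Ioi (0:ℝ), u * Real.exp (-a*u^2 + -b*u))
      = - ∫ u in Set.Iic (0:ℝ), u * Real.exp (-a*u^2 + b*u) := by
    rw [show (∫ u in Set.Iic (0:ℝ), u * Real.exp (-a*u^2 + b*u))
        = ∫ u in Set.Iic (0:ℝ), u * Real.exp (-(a*u^2) + b*u) by congr 1; funext u; ring_nf]
    rw [← h2, neg_neg]
    congr 1
    funext u
    ring_nf
  rw [h3, sub_neg_eq_add, add_comm]
  exact intervalIntegral.integral_Iic_add_Ioi hint.integrableOn hint.integrableOn

private lemma laplace_main (t x lam : ℝ) (ht : 0 < t) (hx : 0 < x) (hlam : 0 ≤ lam)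
    (p : ℝ → ℝ)
    (hp : ∀ y, p y = (1 / Real.sqrt (2 * π * t * x)) * Real.exp (-(x + y) / (2 * t))
        * Real.sinh (Real.sqrt (x * y) / t)) :
    (∫ y in Set.Ioi (0 : ℝ), Real.exp (-lam * y) * p y)
      = (1 + 2 * lam * t) ^ (-(3 : ℝ) / 2) * Real.exp (-lam * x / (1 + 2 * lam * t)) := by
  set C : ℝ := 1 / Real.sqrt (2 * π * t * x) with hCdef
  set a : ℝ := lam + 1/(2*t) with hadef
  set b : ℝ := Real.sqrt x / t with hbdef
  set s : ℝ := 1 + 2*lam*t with hsdef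
  set K : ℝ := C * Real.exp (-x/(2*t)) with hKdef
  have ha : 0 < a := by positivity
  have hs : 0 < s := by positivity
  -- substitution y = u^2
  have hsub := MeasureTheory.integral_comp_rpow_Ioi
    (fun y : ℝ => Real.exp (-lam * y) * p y) (p := (2:ℝ)) two_ne_zero
  rw [← hsub]
  -- rewrite the substituted integrand
  have hcongr : ∫ u in Set.Ioi (0:ℝ),
      (|(2:ℝ)| * u ^ ((2:ℝ) - 1)) • (Real.exp (-lam * u ^ (2:ℝ)) * p (u ^ (2:ℝ)))
      = ∫ u in Set.Ioi (0:ℝ),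
        (K * (u * Real.exp (-a*u^2 + b*u)) - K * (u * Real.exp (-a*u^2 + -b*u))) := by
    apply setIntegral_congr_fun measurableSet_Ioi
    intro u hu
    have hu0 : 0 < u := hu
    have hr2 : u ^ (2:ℝ) = u^2 := by
      rw [show (2:ℝ) = ((2:ℕ):ℝ) by norm_num, Real.rpow_natCast]
    have hr1 : u ^ ((2:ℝ)-1) = u := by
      norm_num
    simp only [smul_eq_mul, hr1, hr2]
    rw [hp, Real.sqrt_mul hx.le, Real.sqrt_sq hu0.le, Real.sinh_eq]
    have e1 : Real.exp (-lam*u^2) * (Real.exp (-(x+u^2)/(2*t)) * Real.exp (Real.sqrt x * u / t))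
        = Real.exp (-x/(2*t)) * Real.exp (-a*u^2 + b*u) := by
      rw [← Real.exp_add, ← Real.exp_add, ← Real.exp_add]
      congr 1
      rw [hadef, hbdef]
      field_simp
      ring
    have e2 : Real.exp (-lam*u^2) * (Real.exp (-(x+u^2)/(2*t)) * Real.exp (-(Real.sqrt x * u / t)))
        = Real.exp (-x/(2*t)) * Real.exp (-a*u^2 + -b*u) := by
      rw [← Real.exp_add, ← Real.exp_add, ← Real.exp_add]
      congr 1
      rw [hadef, hbdef]
      field_simp
      ring
    rw [abs_two, hKdef]
    linear_combination (C*u) * e1 - (C*u) * e2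
  rw [hcongr]
  rw [MeasureTheory.integral_sub (((intg' a b ha).const_mul K).integrableOn)
      (((intg' a (-b) ha).const_mul K).integrableOn.congr_fun
        (fun u _ => by ring_nf) measurableSet_Ioi)]
  rw [integral_const_mul, integral_const_mul, ← mul_sub,
    halves' a b ha, gauss_lin' a b ha]
  -- final algebra
  have hexp : Real.exp (-x/(2*t)) * Real.exp (b^2/(4*a)) = Real.exp (-lam*x/s) := by
    rw [← Real.exp_add]
    congr 1
    have h2 : (Real.sqrt x)^2 = x := Real.sq_sqrt hx.le
    rw [hbdef, div_pow, h2, hadef, hsdef]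
    field_simp
    ring
  have hpre : C * (b/(2*a)) * Real.sqrt (π/a) = s ^ (-(3:ℝ)/2) := by
    have hts : 2*t*a = s := by rw [hadef, hsdef]; field_simp; ring
    have hL : 0 < C * (b/(2*a)) * Real.sqrt (π/a) := by
      rw [hCdef, hbdef]; positivity
    have hR : 0 < s ^ (-(3:ℝ)/2) := rpow_pos_of_pos hs _
    have hsq : (C * (b/(2*a)) * Real.sqrt (π/a))^2 = (s ^ (-(3:ℝ)/2))^2 := by
      have h1 : (Real.sqrt (2 * π * t * x))^2 = 2*π*t*x := Real.sq_sqrt (by positivity)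
      have h2 : (Real.sqrt x)^2 = x := Real.sq_sqrt hx.le
      have h3 : (Real.sqrt (π/a))^2 = π/a := Real.sq_sqrt (by positivity)
      have h4 : (s ^ (-(3:ℝ)/2))^2 = (s^3)⁻¹ := by
        rw [← Real.rpow_natCast (s ^ (-(3:ℝ)/2)) 2, ← Real.rpow_mul hs.le]
        norm_num
      rw [h4, hCdef, hbdef, mul_pow, mul_pow, one_div, inv_pow, h1, h3, div_pow, div_pow, h2]
      rw [← hts]
      have hπ := pi_pos
      field_simp
    have := congrArg Real.sqrt hsq
    rwa [Real.sqrt_sq hL.le, Real.sqrt_sq hR.le] at this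
  calc K * (b/(2*a) * Real.sqrt (π/a) * Real.exp (b^2/(4*a)))
      = (C * (b/(2*a)) * Real.sqrt (π/a)) * (Real.exp (-x/(2*t)) * Real.exp (b^2/(4*a))) := by
        rw [hKdef]; ring
    _ = s ^ (-(3:ℝ)/2) * Real.exp (-lam*x/s) := by rw [hexp, hpre]

/-- Laplace transform identity (3.11) for the transition density (3.12) of the
squared Bessel process of dimension 3, together with the normalization
`∫ p(t,x,y) dy = 1`. -/
theorem stmt_3 (t x lam : ℝ) (ht : 0 < t) (hx : 0 < x) (hlam : 0 ≤ lam)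
    (p : ℝ → ℝ)
    (hp : ∀ y, p y = (1 / Real.sqrt (2 * π * t * x)) * Real.exp (-(x + y) / (2 * t))
        * Real.sinh (Real.sqrt (x * y) / t)) :
    (∫ y in Set.Ioi (0 : ℝ), Real.exp (-lam * y) * p y)
      = (1 + 2 * lam * t) ^ (-(3 : ℝ) / 2) * Real.exp (-lam * x / (1 + 2 * lam * t))
    ∧ (∫ y in Set.Ioi (0 : ℝ), p y) = 1 := by
  constructor
  · exact laplace_main t x lam ht hx hlam p hp
  · have h0 := laplace_main t x 0 ht hx le_rfl p hp
    simpa using h0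
end

section
/- For all t > 0, x > 0, and λ ≥ 0, with p₂(t,x,y) = (1/√(2π t x)) e^{−(x+y)/(2t)} cosh(√(xy)/t), one has ∫_0^∞ y^{−1/2} e^{−λ y} p₂(t,x,y) dy = (1/√(x(1+2λt))) exp( −λx/(1+2λt) ). -/
open Real MeasureTheory

lemma integrable_exp_quad {a : ℝ} (ha : 0 < a) (b : ℝ) :
    Integrable (fun u : ℝ => Real.exp (-a * u ^ 2 + b * u)) := by
  have h : ∀ u : ℝ, Real.exp (-a * u ^ 2 + b * u)
      = Real.exp (b ^ 2 / (4 * a)) * Real.exp (-a * (u - b / (2 * a)) ^ 2) := by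
    intro u
    rw [← Real.exp_add]
    congr 1
    field_simp
    ring
  simp_rw [h]
  exact ((integrable_exp_neg_mul_sq ha).comp_sub_right (b / (2 * a))).const_mul _

lemma integral_exp_quad {a : ℝ} (ha : 0 < a) (b : ℝ) :
    (∫ u : ℝ, Real.exp (-a * u ^ 2 + b * u))
      = Real.sqrt (π / a) * Real.exp (b ^ 2 / (4 * a)) := by
  have h : ∀ u : ℝ, Real.exp (-a * u ^ 2 + b * u)
      = Real.exp (b ^ 2 / (4 * a)) * Real.exp (-a * (u - b / (2 * a)) ^ 2) := by
    intro u
    rw [← Real.exp_add]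
    congr 1
    field_simp
    ring
  simp_rw [h]
  rw [integral_const_mul]
  have := MeasureTheory.integral_sub_right_eq_self (μ := (volume : Measure ℝ))
    (fun u : ℝ => Real.exp (-a * u ^ 2)) (b / (2 * a))
  rw [this]
  rw [integral_gaussian]
  ring

/-- Generalized Laplace transform identity (3.13) for the second fundamental
solution (3.14) of `u_t = 2x u_xx + 3 u_x`. -/
theorem stmt_4 (t x lam : ℝ) (ht : 0 < t) (hx : 0 < x) (hlam : 0 ≤ lam)
    (p₂ : ℝ → ℝ)
    (hp₂ : ∀ y, p₂ y = (1 / Real.sqrt (2 * π * t * x)) * Real.exp (-(x + y) / (2 * t))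
        * Real.cosh (Real.sqrt (x * y) / t)) :
    (∫ y in Set.Ioi (0 : ℝ), y ^ (-(1 : ℝ) / 2) * Real.exp (-lam * y) * p₂ y)
      = (1 / Real.sqrt (x * (1 + 2 * lam * t)))
        * Real.exp (-lam * x / (1 + 2 * lam * t)) := by
  set C : ℝ := 1 / Real.sqrt (2 * π * t * x) with hC
  set b : ℝ := Real.sqrt x / t with hb
  set a : ℝ := lam + 1 / (2 * t) with ha
  have ha0 : 0 < a := by
    rw [ha]; positivity
  have hs0 : (0:ℝ) < 1 + 2 * lam * t := by nlinarith
  set K : ℝ := C * Real.exp (-x / (2 * t)) with hK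
  -- substitution y = u ^ 2
  have sub := MeasureTheory.integral_comp_rpow_Ioi_of_pos
    (g := fun y : ℝ => y ^ (-(1 : ℝ) / 2) * Real.exp (-lam * y) * p₂ y) (p := (2:ℝ)) two_pos
  rw [← sub]
  have key : ∀ u ∈ Set.Ioi (0:ℝ),
      ((2:ℝ) * u ^ ((2:ℝ) - 1)) • ((fun y : ℝ => y ^ (-(1 : ℝ) / 2) * Real.exp (-lam * y) * p₂ y) (u ^ (2:ℝ)))
        = K * Real.exp (-a * u ^ 2 + b * u) + K * Real.exp (-a * u ^ 2 + -b * u) := by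
    intro u hu
    have hu0 : (0:ℝ) < u := hu
    have h1 : u ^ ((2:ℝ)) = u ^ 2 := by
      rw [show (2:ℝ) = ((2:ℕ):ℝ) by norm_num, Real.rpow_natCast]
    have h2 : ((u ^ 2 : ℝ)) ^ (-(1:ℝ)/2) = u⁻¹ := by
      rw [← Real.rpow_natCast u 2, ← Real.rpow_mul hu0.le]
      norm_num
      rw [Real.rpow_neg_one]
    have h3 : u ^ ((2:ℝ) - 1) = u := by
      rw [show ((2:ℝ) - 1) = 1 by norm_num, Real.rpow_one]
    have hkey : ∀ s : ℝ, K * Real.exp (-a * u ^ 2 + s)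
        = C * (Real.exp (-lam * u ^ 2) * Real.exp (-(x + u ^ 2) / (2 * t)) * Real.exp s) := by
      intro s
      rw [hK, mul_assoc, ← Real.exp_add, ← Real.exp_add, ← Real.exp_add]
      congr 1
      rw [ha]
      field_simp
      ring
    simp only [smul_eq_mul, hp₂, h1, h2, h3]
    rw [Real.sqrt_mul hx.le, Real.sqrt_sq hu0.le, Real.cosh_eq]
    rw [show Real.sqrt x * u / t = b * u by rw [hb]; ring]
    rw [hkey (b * u), hkey (-b * u)]
    rw [show -(b * u) = -b * u by ring]
    field_simp
  rw [setIntegral_congr_fun measurableSet_Ioi key]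
  -- split and compute the Gaussian integrals
  have hint : ∀ c : ℝ, Integrable (fun u : ℝ => K * Real.exp (-a * u ^ 2 + c * u)) :=
    fun c => (integrable_exp_quad ha0 c).const_mul K
  rw [MeasureTheory.integral_add ((hint b).integrableOn) ((hint (-b)).integrableOn)]
  have flip : (∫ u in Set.Ioi (0:ℝ), K * Real.exp (-a * u ^ 2 + -b * u))
      = ∫ u in Set.Iic (0:ℝ), K * Real.exp (-a * u ^ 2 + b * u) := by
    have h := integral_comp_neg_Ioi (0:ℝ) (fun u => K * Real.exp (-a * u ^ 2 + b * u))
    rw [neg_zero] at h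
    rw [← h]
    refine setIntegral_congr_fun measurableSet_Ioi (fun u _ => ?_)
    congr 1
    ring
  rw [flip, add_comm, intervalIntegral.integral_Iic_add_Ioi
    ((hint b).integrableOn) ((hint b).integrableOn)]
  rw [MeasureTheory.integral_const_mul, integral_exp_quad ha0 b]
  -- final algebra
  have hb2 : b ^ 2 = x / t ^ 2 := by rw [hb, div_pow, Real.sq_sqrt hx.le]
  have hsqrt : C * Real.sqrt (π / a) = 1 / Real.sqrt (x * (1 + 2 * lam * t)) := by
    have h1 : π / a / (2 * π * t * x) = (x * (1 + 2 * lam * t))⁻¹ := by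
      rw [ha]
      field_simp
      ring
    rw [hC]
    rw [show 1 / Real.sqrt (2 * π * t * x) * Real.sqrt (π / a)
        = Real.sqrt (π / a) / Real.sqrt (2 * π * t * x) by ring]
    rw [← Real.sqrt_div (by positivity), h1, Real.sqrt_inv, one_div]
  have hexp : Real.exp (-x / (2 * t)) * Real.exp (b ^ 2 / (4 * a))
      = Real.exp (-lam * x / (1 + 2 * lam * t)) := by
    rw [← Real.exp_add]
    congr 1
    rw [hb2, ha]
    field_simp
    ring
  calc K * (Real.sqrt (π / a) * Real.exp (b ^ 2 / (4 * a)))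
      = (C * Real.sqrt (π / a)) * (Real.exp (-x / (2 * t)) * Real.exp (b ^ 2 / (4 * a))) := by
        rw [hK]; ring
    _ = (1 / Real.sqrt (x * (1 + 2 * lam * t))) * Real.exp (-lam * x / (1 + 2 * lam * t)) := by
        rw [hsqrt, hexp]
end

section
/- For all t > 0 and x > 0, with p₂(t,x,y) = (1/√(2π t x)) e^{−(x+y)/(2t)} cosh(√(xy)/t), one has ∫_0^∞ p₂(t,x,y) dy = √(2t/(π x)) e^{−x/(2t)} + erf(√(x/(2t))). -/
open Real MeasureTheory Filter Topology

/-- The error function `erf z = (2/√π) ∫_0^z e^{-s²} ds`. -/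
noncomputable def errFun (z : ℝ) : ℝ :=
  (2 / Real.sqrt π) * ∫ s in (0 : ℝ)..z, Real.exp (-s ^ 2)

lemma hasDerivAt_errFun (z : ℝ) :
    HasDerivAt errFun ((2 / Real.sqrt π) * Real.exp (-z ^ 2)) z := by
  have hc : Continuous fun s : ℝ => Real.exp (-s ^ 2) := by continuity
  have h : HasDerivAt (fun u => ∫ s in (0:ℝ)..u, Real.exp (-s ^ 2)) (Real.exp (-z^2)) z := by
    refine intervalIntegral.integral_hasDerivAt_right
      (hc.intervalIntegrable _ _) (hc.stronglyMeasurableAtFilter _ _) hc.continuousAt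
  exact h.const_mul (2 / Real.sqrt π)

lemma continuous_errFun : Continuous errFun :=
  continuous_iff_continuousAt.2 fun z => (hasDerivAt_errFun z).continuousAt

lemma errFun_neg (z : ℝ) : errFun (-z) = - errFun z := by
  unfold errFun
  have h := intervalIntegral.integral_comp_neg (a := (0:ℝ)) (b := z)
      (fun s => Real.exp (-s ^ 2))
  simp only [neg_zero, neg_neg, even_two, Even.neg_pow] at h
  have h2 : (∫ s in (0:ℝ)..(-z), Real.exp (-s ^ 2))
      = - ∫ s in ((-z):ℝ)..0, Real.exp (-s ^ 2) :=
    (intervalIntegral.integral_symm _ _)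
  rw [h2, ← h]; ring

lemma tendsto_sqrt_atTop' : Tendsto Real.sqrt atTop atTop := by
  apply tendsto_atTop_atTop.2
  intro b
  refine ⟨(max b 0) ^ 2, fun a ha => ?_⟩
  calc b ≤ max b 0 := le_max_left _ _
    _ = Real.sqrt ((max b 0) ^ 2) := (Real.sqrt_sq (le_max_right _ _)).symm
    _ ≤ Real.sqrt a := Real.sqrt_le_sqrt ha

lemma tendsto_errFun_atTop :
    Tendsto errFun atTop (𝓝 ((2 / Real.sqrt π) * ∫ s in Set.Ioi (0:ℝ), Real.exp (-s ^ 2))) := by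
  have hint : IntegrableOn (fun s : ℝ => Real.exp (-s ^ 2)) (Set.Ioi 0) := by
    have := (integrable_exp_neg_mul_sq (b := 1) one_pos).integrableOn
      (s := Set.Ioi (0:ℝ))
    simpa using this
  have h := intervalIntegral_tendsto_integral_Ioi (0:ℝ) hint tendsto_id
  exact (h.const_mul (2 / Real.sqrt π))

/-- The integral identity (3.15) for the second fundamental solution (3.14)
of `u_t = 2x u_xx + 3 u_x`. -/
theorem stmt_5 (t x : ℝ) (ht : 0 < t) (hx : 0 < x)
    (p₂ : ℝ → ℝ)
    (hp₂ : ∀ y, p₂ y = (1 / Real.sqrt (2 * π * t * x)) * Real.exp (-(x + y) / (2 * t))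
        * Real.cosh (Real.sqrt (x * y) / t)) :
    (∫ y in Set.Ioi (0 : ℝ), p₂ y)
      = Real.sqrt (2 * t / (π * x)) * Real.exp (-x / (2 * t))
        + errFun (Real.sqrt (x / (2 * t))) := by
  have hπ : 0 < π := Real.pi_pos
  set a : ℝ := Real.sqrt x with ha
  set b : ℝ := Real.sqrt (2 * t) with hb
  have ha2 : a ^ 2 = x := Real.sq_sqrt hx.le
  have hapos : 0 < a := Real.sqrt_pos.2 hx
  have hbpos : 0 < b := Real.sqrt_pos.2 (by linarith)
  have hb2 : b ^ 2 = 2 * t := Real.sq_sqrt (by linarith)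
  set C : ℝ := 1 / (2 * Real.sqrt (2 * π * t * x)) with hC
  have hsq : (0:ℝ) < 2 * π * t * x := by positivity
  have hCpos : 0 < C := by positivity
  -- the antiderivative
  set G : ℝ → ℝ := fun u => C * (-(2*t) * (Real.exp (-(u - a)^2 / (2*t))
      + Real.exp (-(u + a)^2 / (2*t)))
      + a * Real.sqrt (2 * π * t) * (errFun ((u - a)/b) - errFun ((u + a)/b))) with hG
  set F : ℝ → ℝ := fun y => G (Real.sqrt y) with hF
  -- derivative of G
  have hGderiv : ∀ u : ℝ, HasDerivAt G
      (C * (2 * u * (Real.exp (-(u - a)^2 / (2*t)) + Real.exp (-(u + a)^2 / (2*t))))) u := by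
    intro u
    have e1 : HasDerivAt (fun u : ℝ => Real.exp (-(u - a)^2 / (2*t)))
        (Real.exp (-(u - a)^2 / (2*t)) * (-(u - a)/t)) u := by
      have hinner : HasDerivAt (fun u : ℝ => -(u - a)^2 / (2*t)) (-(u - a)/t) u := by
        have h0 : HasDerivAt (fun u : ℝ => (u - a)^2) (2 * (u - a)) u := by
          simpa using ((hasDerivAt_id u).sub_const a).fun_pow 2
        have := (h0.neg).div_const (2*t)
        refine this.congr_deriv ?_
        field_simp
      exact hinner.exp
    have e2 : HasDerivAt (fun u : ℝ => Real.exp (-(u + a)^2 / (2*t)))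
        (Real.exp (-(u + a)^2 / (2*t)) * (-(u + a)/t)) u := by
      have hinner : HasDerivAt (fun u : ℝ => -(u + a)^2 / (2*t)) (-(u + a)/t) u := by
        have h0 : HasDerivAt (fun u : ℝ => (u + a)^2) (2 * (u + a)) u := by
          simpa using ((hasDerivAt_id u).add_const a).fun_pow 2
        have := (h0.neg).div_const (2*t)
        refine this.congr_deriv ?_
        field_simp
      exact hinner.exp
    have f1 : HasDerivAt (fun u : ℝ => errFun ((u - a)/b))
        ((2 / Real.sqrt π) * Real.exp (-((u - a)/b) ^ 2) * (1/b)) u := by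
      have hlin : HasDerivAt (fun u : ℝ => (u - a)/b) (1/b) u := by
        simpa using ((hasDerivAt_id u).sub_const a).div_const b
      exact HasDerivAt.comp (h₂ := errFun) u (hasDerivAt_errFun ((u - a)/b)) hlin
    have f2 : HasDerivAt (fun u : ℝ => errFun ((u + a)/b))
        ((2 / Real.sqrt π) * Real.exp (-((u + a)/b) ^ 2) * (1/b)) u := by
      have hlin : HasDerivAt (fun u : ℝ => (u + a)/b) (1/b) u := by
        simpa using ((hasDerivAt_id u).add_const a).div_const b
      exact HasDerivAt.comp (h₂ := errFun) u (hasDerivAt_errFun ((u + a)/b)) hlin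
    have hsum := (((e1.add e2).const_mul (-(2*t))).add
      ((f1.sub f2).const_mul (a * Real.sqrt (2 * π * t)))).const_mul C
    refine hsum.congr_deriv ?_
    have hdivsq : ∀ v : ℝ, -(v / b) ^ 2 = -v ^ 2 / (2 * t) := by
      intro v; rw [div_pow, hb2]; ring
    have hsp : Real.sqrt (2 * π * t) = Real.sqrt π * b := by
      rw [hb, show 2 * π * t = π * (2 * t) by ring, Real.sqrt_mul hπ.le]
    have ht' : (t:ℝ) ≠ 0 := ht.ne'
    have hb' : b ≠ 0 := hbpos.ne'
    have hπ' : Real.sqrt π ≠ 0 := by positivity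
    rw [hdivsq (u - a), hdivsq (u + a), hsp]
    field_simp
    ring
  -- continuity of G and F
  have hGc : Continuous G := continuous_iff_continuousAt.2 fun u => (hGderiv u).continuousAt
  have hFc : Continuous F := hGc.comp Real.continuous_sqrt
  -- derivative of F on Ioi 0 is p₂
  have hFderiv : ∀ y ∈ Set.Ioi (0:ℝ), HasDerivAt F (p₂ y) y := by
    intro y hy
    have hy' : (0:ℝ) < y := hy
    have hsy : 0 < Real.sqrt y := Real.sqrt_pos.2 hy'
    have hyy : Real.sqrt y ^ 2 = y := Real.sq_sqrt hy'.le
    have hcomp := (hGderiv (Real.sqrt y)).comp y (Real.hasDerivAt_sqrt hy'.ne')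
    have heq : (C * (2 * Real.sqrt y * (Real.exp (-(Real.sqrt y - a)^2 / (2*t))
        + Real.exp (-(Real.sqrt y + a)^2 / (2*t))))) * (1 / (2 * Real.sqrt y)) = p₂ y := by
      rw [hp₂ y, Real.sqrt_mul hx.le, Real.cosh_eq]
      have q1 : (Real.sqrt y - a)^2 = (x + y) - 2*(a*Real.sqrt y) := by
        linear_combination hyy + ha2
      have q2 : (Real.sqrt y + a)^2 = (x + y) + 2*(a*Real.sqrt y) := by
        linear_combination hyy + ha2
      rw [q1, q2]
      have e1 : Real.exp (-((x + y) - 2*(a*Real.sqrt y)) / (2*t))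
          = Real.exp (-(x+y)/(2*t)) * Real.exp (a * Real.sqrt y / t) := by
        rw [← Real.exp_add]; congr 1; field_simp; ring
      have e2 : Real.exp (-((x + y) + 2*(a*Real.sqrt y)) / (2*t))
          = Real.exp (-(x+y)/(2*t)) * Real.exp (-(a * Real.sqrt y / t)) := by
        rw [← Real.exp_add]; congr 1; field_simp; ring
      rw [e1, e2, hC]
      have hxysq : Real.sqrt x * Real.sqrt y = a * Real.sqrt y := by rw [ha]
      rw [hxysq]
      field_simp
    exact heq ▸ hcomp
  -- nonnegativity
  have hnonneg : ∀ y ∈ Set.Ioi (0:ℝ), 0 ≤ p₂ y := by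
    intro y _
    rw [hp₂ y]
    have h1 : (0:ℝ) ≤ 1 / Real.sqrt (2 * π * t * x) := by positivity
    exact mul_nonneg (mul_nonneg h1 (Real.exp_pos _).le) (Real.cosh_pos _).le
  -- limit at infinity
  set L : ℝ := (2 / Real.sqrt π) * ∫ s in Set.Ioi (0:ℝ), Real.exp (-s ^ 2) with hL
  have hFtop : Tendsto F atTop (𝓝 0) := by
    have htop1 : Tendsto (fun u : ℝ => u - a) atTop atTop :=
      tendsto_atTop_add_const_right atTop (-a) tendsto_id |>.congr (by intro u; simp only [id_eq]; ring)
    have htop2 : Tendsto (fun u : ℝ => u + a) atTop atTop :=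
      tendsto_atTop_add_const_right atTop a tendsto_id
    have hexp : ∀ g : ℝ → ℝ, Tendsto g atTop atTop →
        Tendsto (fun u : ℝ => Real.exp (-(g u)^2 / (2*t))) atTop (𝓝 0) := by
      intro g hg
      have hsq : Tendsto (fun u : ℝ => (g u)^2) atTop atTop := by
        have := hg.atTop_mul_atTop₀ hg
        refine this.congr (by intro u; ring)
      have hdiv : Tendsto (fun u : ℝ => (g u)^2 / (2*t)) atTop atTop :=
        hsq.atTop_div_const (by linarith)
      have := Real.tendsto_exp_neg_atTop_nhds_zero.comp hdiv
      refine this.congr (by intro u; simp [neg_div])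
    have h1 := hexp _ htop1
    have h2 := hexp _ htop2
    have h3 : Tendsto (fun u : ℝ => errFun ((u - a)/b)) atTop (𝓝 L) :=
      tendsto_errFun_atTop.comp (htop1.atTop_div_const hbpos)
    have h4 : Tendsto (fun u : ℝ => errFun ((u + a)/b)) atTop (𝓝 L) :=
      tendsto_errFun_atTop.comp (htop2.atTop_div_const hbpos)
    have hG0 : Tendsto G atTop
        (𝓝 (C * (-(2*t) * ((0:ℝ) + 0) + a * Real.sqrt (2 * π * t) * (L - L)))) :=
      (((h1.add h2).const_mul (-(2*t))).add ((h3.sub h4).const_mul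
        (a * Real.sqrt (2 * π * t)))).const_mul C
    have hval : (C * (-(2*t) * ((0:ℝ) + 0) + a * Real.sqrt (2 * π * t) * (L - L))) = 0 := by
      ring
    rw [hval] at hG0
    exact hG0.comp tendsto_sqrt_atTop'
  -- apply FTC
  have hint := integral_Ioi_of_hasDerivAt_of_nonneg (g := F) (g' := p₂) (a := 0) (l := 0)
    hFc.continuousWithinAt hFderiv hnonneg hFtop
  rw [hint]
  -- compute F 0
  have hF0 : F 0 = C * (-(2*t) * (2 * Real.exp (-x / (2*t)))
      - a * Real.sqrt (2 * π * t) * (2 * errFun (a / b))) := by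
    show G (Real.sqrt 0) = _
    rw [Real.sqrt_zero, hG]
    have hn : ((0:ℝ) - a) / b = -(a / b) := by ring
    have hp : ((0:ℝ) + a) / b = a / b := by ring
    simp only [hn, hp, errFun_neg]
    have q1 : -((0:ℝ) - a)^2 / (2*t) = -x / (2*t) := by
      rw [show ((0:ℝ) - a)^2 = a^2 by ring, ha2]
    have q2 : -((0:ℝ) + a)^2 / (2*t) = -x / (2*t) := by
      rw [show ((0:ℝ) + a)^2 = a^2 by ring, ha2]
    rw [q1, q2]
    ring
  rw [hF0]
  -- final algebra
  have hab : a / b = Real.sqrt (x / (2*t)) := by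
    rw [Real.sqrt_div hx.le, ha, hb]
  have hkey1 : Real.sqrt (2 * t / (π * x)) = 4 * t * C := by
    rw [show 2 * t / (π * x) = (2*t)^2 / (2 * π * t * x) by field_simp,
      Real.sqrt_div (sq_nonneg _), Real.sqrt_sq (by linarith : (0:ℝ) ≤ 2*t), hC]
    field_simp
    ring
  have hkey2 : 2 * (a * Real.sqrt (2 * π * t)) * C = 1 := by
    have hprod : a * Real.sqrt (2 * π * t) = Real.sqrt (2 * π * t * x) := by
      rw [ha, mul_comm, ← Real.sqrt_mul (by positivity : (0:ℝ) ≤ 2 * π * t)]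
    rw [hprod, hC]
    field_simp
  rw [hab] at *
  calc (0:ℝ) - C * (-(2*t) * (2 * Real.exp (-x / (2*t)))
      - a * Real.sqrt (2 * π * t) * (2 * errFun (Real.sqrt (x / (2*t)))))
      = (4 * t * C) * Real.exp (-x / (2*t))
        + (2 * (a * Real.sqrt (2 * π * t)) * C) * errFun (Real.sqrt (x / (2*t))) := by ring
    _ = Real.sqrt (2 * t / (π * x)) * Real.exp (-x / (2 * t))
        + errFun (Real.sqrt (x / (2 * t))) := by rw [hkey1, hkey2, one_mul]
end
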